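/- arXiv:2110.15572 — 2 statements merged into one kernel-verified Lean document; each statement's English description precedes it below -/
import Mathlib

section
/- Committal rate main theorem: let A be any policy optimization algorithm, i.e. for each t ≥ 1 a deterministic map from histories (θ_1, a_1, r(a_1), …, θ_t, a_t, r(a_t)) to θ_{t+1} ∈ ℝ^K. Fix a sub-optimal action a (r(a) < r(a*)) with π_{θ_1}(a) > 0, and let (θ̃_t)_{t≥1} be the deterministic parameter sequence produced by A when the action a is sampled at every step. Suppose there exist α > 1 and C < ∞ with t^α·(1 − π_{θ̃_t}(a)) ≤ C for all t ≥ 1 (i.e. κ(A, a) > 1). Then in any on-policy process driven by A, P(a_t = a for all t ≥ 1) = ∏_{t=1}^∞ π_{θ̃_t}(a) > 0, and on this event π_{θ_t}(a) → 1; consequently A does not converge to the globally optimal policy almost surely. Hence κ(A, a) ≤ 1 for every sub-optimal action a with π_{θ_1}(a) > 0 is necessary for almost-sure convergence to global optimality. -/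
open Finset Real Filter MeasureTheory

/-- Softmax policy: `π_θ(a) = exp(θ(a)) / Σ_{a'} exp(θ(a'))`. -/
noncomputable def softmax {K : ℕ} (θ : Fin K → ℝ) (a : Fin K) : ℝ :=
  Real.exp (θ a) / ∑ a', Real.exp (θ a')

lemma sum_exp_pos {K : ℕ} (θ : Fin K → ℝ) (b : Fin K) :
    0 < ∑ a', Real.exp (θ a') :=
  Finset.sum_pos (fun i _ => Real.exp_pos _) ⟨b, Finset.mem_univ b⟩

lemma softmax_pos {K : ℕ} (θ : Fin K → ℝ) (b : Fin K) : 0 < softmax θ b :=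
  div_pos (Real.exp_pos _) (sum_exp_pos θ b)

lemma softmax_le_one {K : ℕ} (θ : Fin K → ℝ) (b : Fin K) : softmax θ b ≤ 1 := by
  rw [softmax, div_le_one (sum_exp_pos θ b)]
  exact Finset.single_le_sum (fun i _ => (Real.exp_pos (θ i)).le) (Finset.mem_univ b)

lemma softmax_add_le_one {K : ℕ} (θ : Fin K → ℝ) {b c : Fin K} (h : b ≠ c) :
    softmax θ b + softmax θ c ≤ 1 := by
  rw [softmax, softmax, ← add_div, div_le_one (sum_exp_pos θ b)]
  have hpair : Real.exp (θ b) + Real.exp (θ c) = ∑ x ∈ ({b, c} : Finset (Fin K)), Real.exp (θ x) :=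
    (Finset.sum_pair (f := fun x => Real.exp (θ x)) h).symm
  rw [hpair]
  exact Finset.sum_le_sum_of_subset_of_nonneg (Finset.subset_univ _)
    (fun i _ _ => (Real.exp_pos (θ i)).le)

/-- Committal rate main theorem.  A policy optimization algorithm `A` maps a history
of action–reward pairs to the next parameter vector (so `θ_1 = A []` and
`θ_{t+1} = A [(a_1, r(a_1)), …, (a_t, r(a_t))]`).  Fix a sub-optimal action `a`
(`r(a) < r(a*)`) with `π_{θ_1}(a) > 0`, and let `θ̃ t = A (replicate t (a, r a))`
be the parameter sequence produced when `a` is sampled at every step.  If there are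
`α > 1` and `C` with `t^α·(1 − π_{θ̃_t}(a)) ≤ C` for all `t` (i.e. `κ(A, a) > 1`),
then in any on-policy process driven by `A`:
`P(a_t = a for all t) = ∏_t π_{θ̃_t}(a) > 0`, on this event `π_{θ_t}(a) → 1`, and
consequently the policies do not converge to the globally optimal policy almost
surely.  (Here `θ t` is the paper's `θ_{t+1}` and `act t` the paper's `a_{t+1}`.) -/
theorem committal_rate_main_theorem
    {K : ℕ} (hK : 2 ≤ K) (r : Fin K → ℝ)
    (hr : ∀ a, 0 < r a ∧ r a ≤ 1)
    (astar : Fin K) (hstar : ∀ a, a ≠ astar → r a < r astar)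
    (A : List (Fin K × ℝ) → (Fin K → ℝ))
    (a : Fin K) (ha : r a < r astar)
    (hpos : 0 < softmax (A []) a)
    (α C : ℝ) (hα : 1 < α)
    (hκ : ∀ t : ℕ,
      ((t : ℝ) + 1) ^ α * (1 - softmax (A (List.replicate t (a, r a))) a) ≤ C)
    {Ω : Type*} {mΩ : MeasurableSpace Ω} (P : Measure Ω) [IsProbabilityMeasure P]
    (F : Filtration ℕ mΩ)
    (act : ℕ → Ω → Fin K) (θ : ℕ → Ω → Fin K → ℝ)
    (hθ : ∀ t ω, θ t ω = A ((List.range t).map fun k => (act k ω, r (act k ω))))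
    (hactmeas : ∀ t, Measurable[F (t + 1)] (act t))
    (hcond : ∀ t b, P[(fun ω => if act t ω = b then (1 : ℝ) else 0)|F t]
      =ᵐ[P] fun ω => softmax (θ t ω) b) :
    P {ω | ∀ t, act t ω = a} =
        ENNReal.ofReal (∏' t : ℕ, softmax (A (List.replicate t (a, r a))) a) ∧
    0 < P {ω | ∀ t, act t ω = a} ∧
    (∀ ω, (∀ t, act t ω = a) →
      Tendsto (fun t => softmax (θ t ω) a) atTop (nhds 1)) ∧
    ¬ (∀ᵐ ω ∂P, Tendsto (fun t => softmax (θ t ω) astar) atTop (nhds 1)) := by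
  set p : ℕ → ℝ := fun t => softmax (A (List.replicate t (a, r a))) a with hp
  have hp_pos : ∀ t, 0 < p t := fun t => softmax_pos _ _
  have hp_le : ∀ t, p t ≤ 1 := fun t => softmax_le_one _ _
  have hrpow_pos : ∀ t : ℕ, (0:ℝ) < ((t:ℝ)+1) ^ α :=
    fun t => Real.rpow_pos_of_pos (by positivity) _
  have hq_le : ∀ t, 1 - p t ≤ C * (((t:ℝ)+1) ^ α)⁻¹ := by
    intro t
    have h := hκ t
    rw [mul_comm, ← le_div_iff₀ (hrpow_pos t)] at h
    rw [mul_comm, inv_mul_eq_div]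
    exact h
  have hq_nonneg : ∀ t, 0 ≤ 1 - p t := fun t => by linarith [hp_le t]
  have hsum_bound : Summable (fun t : ℕ => C * (((t:ℝ)+1) ^ α)⁻¹) := by
    apply Summable.mul_left
    have h1 : Summable (fun n : ℕ => ((n:ℝ) ^ α)⁻¹) := Real.summable_nat_rpow_inv.2 hα
    have h2 := (summable_nat_add_iff 1).2 h1
    apply h2.congr
    intro n
    push_cast
    ring_nf
  have hqsum : Summable (fun t => 1 - p t) :=
    Summable.of_nonneg_of_le hq_nonneg hq_le hsum_bound
  have hp_tendsto : Tendsto p atTop (nhds 1) := by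
    have h0 := hqsum.tendsto_atTop_zero
    have h1 : Tendsto (fun t => 1 - (1 - p t)) atTop (nhds (1 - 0)) :=
      tendsto_const_nhds.sub h0
    simpa using h1
  -- summability of logs
  have hlog_le : ∀ t, 1/2 ≤ p t → -Real.log (p t) ≤ 2 * (1 - p t) := by
    intro t ht
    have hpt : 0 < p t := hp_pos t
    have hexp := Real.add_one_le_exp (2 * (1 - p t))
    have h1 : 1 ≤ p t * Real.exp (2 * (1 - p t)) := by nlinarith [hp_le t]
    have h2 : 1 / p t ≤ Real.exp (2 * (1 - p t)) := by
      rw [div_le_iff₀ hpt]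
      nlinarith
    have h3 : Real.log (1 / p t) ≤ 2 * (1 - p t) := by
      calc Real.log (1 / p t) ≤ Real.log (Real.exp (2 * (1 - p t))) :=
            Real.log_le_log (by positivity) h2
        _ = 2 * (1 - p t) := Real.log_exp _
    rw [one_div, Real.log_inv] at h3
    exact h3
  have hlogsum : Summable (fun t => Real.log (p t)) := by
    have hev : ∀ᶠ t in atTop, 1/2 ≤ p t :=
      hp_tendsto.eventually (eventually_ge_nhds (by norm_num : (1:ℝ)/2 < 1))
    obtain ⟨N, hN⟩ := eventually_atTop.1 hev
    have hshift : Summable (fun n : ℕ => 2 * (1 - p (n + N))) :=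
      (summable_nat_add_iff N).2 (hqsum.mul_left 2)
    have hneg : Summable (fun t => -Real.log (p t)) := by
      rw [← summable_nat_add_iff N]
      apply Summable.of_nonneg_of_le _ _ hshift
      · intro n
        rw [neg_nonneg]
        exact Real.log_nonpos (hp_pos _).le (hp_le _)
      · intro n
        exact hlog_le _ (hN _ (Nat.le_add_left N n))
    simpa using hneg.neg
  have hprod : HasProd p (∏' t, p t) :=
    (Real.multipliable_of_summable_log hp_pos hlogsum).hasProd
  have htprod_eq : ∏' t, p t = Real.exp (∑' t, Real.log (p t)) :=
    (Real.rexp_tsum_eq_tprod hp_pos hlogsum).symm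
  have hL_pos : 0 < ∏' t, p t := htprod_eq ▸ Real.exp_pos _
  -- the θ's coincide with the deterministic sequence
  have hθeq : ∀ n ω, (∀ t < n, act t ω = a) →
      θ n ω = A (List.replicate n (a, r a)) := by
    intro n ω hω
    rw [hθ]
    refine congrArg A ?_
    rw [List.eq_replicate_iff]
    refine ⟨by simp, ?_⟩
    intro x hx
    simp only [List.mem_map, List.mem_range] at hx
    obtain ⟨k, hk, rfl⟩ := hx
    rw [hω k hk]
  -- the events
  set E : ℕ → Set Ω := fun n => {ω | ∀ t < n, act t ω = a} with hEdef
  have hEmeasF : ∀ n, MeasurableSet[F n] (E n) := by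
    intro n
    have hrw : E n = ⋂ t, ⋂ (_ : t < n), act t ⁻¹' {a} := by
      ext ω
      simp only [Set.mem_iInter, Set.mem_preimage, Set.mem_singleton_iff]
      exact Iff.rfl
    rw [hrw]
    refine MeasurableSet.iInter fun t => MeasurableSet.iInter fun ht => ?_
    exact F.mono ht _ ((hactmeas t) (measurableSet_singleton a))
  have hEmeas : ∀ n, MeasurableSet (E n) := fun n => F.le n _ (hEmeasF n)
  have hstep : ∀ n, (P (E (n+1))).toReal = (P (E n)).toReal * p n := by
    intro n
    have hT : MeasurableSet (act n ⁻¹' {a}) :=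
      F.le (n+1) _ ((hactmeas n) (measurableSet_singleton a))
    have hind : (fun ω => if act n ω = a then (1:ℝ) else 0)
        = Set.indicator (act n ⁻¹' {a}) (fun _ => 1) := by
      ext ω
      by_cases h : act n ω = a
      · have hm : ω ∈ act n ⁻¹' {a} := by simp [h]
        simp [Set.indicator_of_mem hm, h]
      · have hm : ω ∉ act n ⁻¹' {a} := by simp [h]
        simp [Set.indicator_of_notMem hm, h]
    have hf_int : Integrable (fun ω => if act n ω = a then (1:ℝ) else 0) P := by
      rw [hind]
      exact (integrable_indicator_iff hT).2
        (integrableOn_const (measure_ne_top _ _))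
    have hEsucc : E n ∩ act n ⁻¹' {a} = E (n+1) := by
      ext ω
      simp only [hEdef, Set.mem_inter_iff, Set.mem_setOf_eq, Set.mem_preimage,
        Set.mem_singleton_iff]
      constructor
      · rintro ⟨h1, h2⟩ t ht
        rcases Nat.lt_succ_iff_lt_or_eq.1 ht with h | rfl
        · exact h1 t h
        · exact h2
      · intro h
        exact ⟨fun t ht => h t (ht.trans (Nat.lt_succ_self n)), h n (Nat.lt_succ_self n)⟩
    have h1 : ∫ ω in E n, (if act n ω = a then (1:ℝ) else 0) ∂P
        = (P (E (n+1))).toReal := by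
      rw [show (fun ω => if act n ω = a then (1:ℝ) else 0) = _ from hind]
      rw [setIntegral_indicator hT, setIntegral_const, hEsucc]
      simp [measureReal_def]
    have h2 : ∫ ω in E n, (P[(fun ω => if act n ω = a then (1:ℝ) else 0)|F n]) ω ∂P
        = ∫ ω in E n, (if act n ω = a then (1:ℝ) else 0) ∂P :=
      setIntegral_condExp (F.le n) hf_int (hEmeasF n)
    have h3 : ∫ ω in E n, (P[(fun ω => if act n ω = a then (1:ℝ) else 0)|F n]) ω ∂P
        = ∫ ω in E n, softmax (θ n ω) a ∂P :=
      setIntegral_congr_ae (hEmeas n) ((hcond n a).mono fun ω h _ => h)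
    have h4 : ∫ ω in E n, softmax (θ n ω) a ∂P = (P (E n)).toReal * p n := by
      have heqon : Set.EqOn (fun ω => softmax (θ n ω) a) (fun _ => p n) (E n) := by
        intro ω hω
        simp only
        rw [hθeq n ω hω]
      rw [setIntegral_congr_fun (hEmeas n) heqon, setIntegral_const, smul_eq_mul, measureReal_def]
    rw [← h1, ← h2, h3, h4]
  have hPn : ∀ n, (P (E n)).toReal = ∏ t ∈ Finset.range n, p t := by
    intro n
    induction n with
    | zero =>
        have : E 0 = Set.univ := by
          ext ω; simp [hEdef]
        simp [this]
    | succ n ih => rw [hstep n, ih, Finset.prod_range_succ]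
  have hS : {ω | ∀ t, act t ω = a} = ⋂ n, E n := by
    ext ω
    simp only [Set.mem_setOf_eq, Set.mem_iInter, hEdef]
    exact ⟨fun h n t _ => h t, fun h t => h (t+1) t (Nat.lt_succ_self t)⟩
  have hanti : Antitone E := fun m n hmn ω hω t ht => hω t (ht.trans_le hmn)
  have hlim1 : Tendsto (fun n => P (E n)) atTop (nhds (P (⋂ n, E n))) :=
    tendsto_measure_iInter_atTop (fun n => (hEmeas n).nullMeasurableSet) hanti
      ⟨0, measure_ne_top _ _⟩
  have hPE : ∀ n, P (E n) = ENNReal.ofReal (∏ t ∈ Finset.range n, p t) := by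
    intro n
    rw [← hPn n, ENNReal.ofReal_toReal (measure_ne_top _ _)]
  have hlim2 : Tendsto (fun n => P (E n)) atTop (nhds (ENNReal.ofReal (∏' t, p t))) :=
    (ENNReal.tendsto_ofReal hprod.tendsto_prod_nat).congr fun n => (hPE n).symm
  have hmain : P {ω | ∀ t, act t ω = a} = ENNReal.ofReal (∏' t, p t) := by
    rw [hS]
    exact tendsto_nhds_unique hlim1 hlim2
  have hSpos : 0 < P {ω | ∀ t, act t ω = a} := by
    rw [hmain]
    exact ENNReal.ofReal_pos.2 hL_pos
  have hpart3 : ∀ ω, (∀ t, act t ω = a) →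
      Tendsto (fun t => softmax (θ t ω) a) atTop (nhds 1) := by
    intro ω hω
    apply hp_tendsto.congr
    intro t
    show p t = softmax (θ t ω) a
    rw [hθeq t ω (fun k _ => hω k)]
  refine ⟨hmain, hSpos, hpart3, ?_⟩
  intro hcontra
  have hne : a ≠ astar := fun h => absurd ha (by rw [h]; exact lt_irrefl _)
  have hex : ∃ ω, (∀ t, act t ω = a) ∧
      Tendsto (fun t => softmax (θ t ω) astar) atTop (nhds 1) := by
    by_contra h
    push_neg at h
    have hsub : {ω | ∀ t, act t ω = a} ⊆
        {ω | ¬ Tendsto (fun t => softmax (θ t ω) astar) atTop (nhds 1)} :=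
      fun ω hω => h ω hω
    have hle := measure_mono (μ := P) hsub
    rw [ae_iff.1 hcontra] at hle
    exact absurd (le_antisymm hle zero_le) (ne_of_gt hSpos)
  obtain ⟨ω, hωS, hωT⟩ := hex
  have h_a := hpart3 ω hωS
  have h2 : Tendsto (fun t => softmax (θ t ω) a + softmax (θ t ω) astar)
      atTop (nhds 2) := by
    have := h_a.add hωT
    norm_num at this
    exact this
  have hle2 : (2:ℝ) ≤ 1 :=
    le_of_tendsto h2 (Eventually.of_forall fun t => softmax_add_le_one _ hne)
  linarith
end

section
/- Fast convergence forces a large committal rate on the optimal action: let A be any policy optimization algorithm (for each t a deterministic map from histories (θ_1, a_1, r(a_1), …, θ_t, a_t, r(a_t)) to θ_{t+1} ∈ ℝ^K) that is optimality-smart, meaning that for every t ≥ 1 and every action sequence (a_1, …, a_{t−1}) with induced parameters θ_t, one has π_{θ̃_t}(a*) ≥ π_{θ_t}(a*), where (θ̃_t) is the sequence induced by sampling a* at every step from the same θ_1. If there exist α > 0, C > 0 and an action sequence whose induced parameter sequence (θ_t) satisfies (π* − π_{θ_t})ᵀ r ≤ C/t^α for all t ≥ 1 (as happens whenever A with on-policy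 sampling converges at rate O(1/t^α) with positive probability), then, since (π* − π_θ)ᵀ r ≥ (1 − π_θ(a*))·Δ for every θ, it follows that t^α·(1 − π_{θ̃_t}(a*)) ≤ C/Δ for all t ≥ 1; hence κ(A, a*) ≥ α. -/
open Finset Real Filter

/-- Expected reward `π_θᵀ r`. -/
noncomputable def expReward {K : ℕ} (r θ : Fin K → ℝ) : ℝ :=
  ∑ a, softmax θ a * r a

lemma softmax_nonneg {K : ℕ} (θ : Fin K → ℝ) (a : Fin K) : 0 ≤ softmax θ a := by
  unfold softmax
  have : (0:ℝ) < ∑ a', Real.exp (θ a') :=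
    Finset.sum_pos (fun i _ => Real.exp_pos _) ⟨a, Finset.mem_univ a⟩
  positivity

lemma softmax_sum {K : ℕ} (hK : 0 < K) (θ : Fin K → ℝ) : ∑ a, softmax θ a = 1 := by
  unfold softmax
  rw [← Finset.sum_div]
  have : (0:ℝ) < ∑ a', Real.exp (θ a') :=
    Finset.sum_pos (fun i _ => Real.exp_pos _)
      ⟨⟨0, hK⟩, Finset.mem_univ _⟩
  field_simp

/-- Fast convergence forces a large committal rate on the optimal action.
A policy optimization algorithm `A` maps a history of action–reward pairs to the
next parameter vector (so `θ_1 = A []` and `θ_{t+1} = A [(a_1, r(a_1)), …, (a_t, r(a_t))]`).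
`A` is optimality-smart: for every action sequence the induced parameters satisfy
`π_{θ̃_t}(a*) ≥ π_{θ_t}(a*)`, where `θ̃ t = A (replicate t (a*, r(a*)))` is the
sequence induced by sampling `a*` at every step.  If some action sequence achieves
`(π* − π_{θ_t})ᵀ r ≤ C/t^α` for all `t` (with `α, C > 0`), then
`t^α·(1 − π_{θ̃_t}(a*)) ≤ C/Δ` for all `t`; hence `κ(A, a*) ≥ α`.
(Here the Lean index `t` is the paper's `t + 1`, so the factor `t^α` becomes
`(t+1)^α`.) -/
theorem fast_rate_forces_large_committal_rate_on_optimal_action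
    {K : ℕ} (hK : 2 ≤ K) (r : Fin K → ℝ)
    (hr : ∀ a, 0 < r a ∧ r a ≤ 1)
    (astar : Fin K) (hstar : ∀ a, a ≠ astar → r a < r astar)
    (Δ : ℝ) (hΔ : Δ = r astar - sSup (r '' {a | a ≠ astar}))
    (A : List (Fin K × ℝ) → (Fin K → ℝ))
    (hsmart : ∀ (acts : ℕ → Fin K) (t : ℕ),
      softmax (A ((List.range t).map fun k => (acts k, r (acts k)))) astar ≤
        softmax (A (List.replicate t (astar, r astar))) astar)
    (acts : ℕ → Fin K) (α C : ℝ) (hα : 0 < α) (hC : 0 < C)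
    (hconv : ∀ t : ℕ,
      r astar - expReward r (A ((List.range t).map fun k => (acts k, r (acts k)))) ≤
        C / ((t : ℝ) + 1) ^ α) :
    ∀ t : ℕ,
      ((t : ℝ) + 1) ^ α * (1 - softmax (A (List.replicate t (astar, r astar))) astar) ≤
        C / Δ := by
  -- basic facts about the set of suboptimal rewards
  have hKpos : 0 < K := by omega
  have hne : ∃ a : Fin K, a ≠ astar := by
    by_contra h
    push_neg at h
    have h0 : (⟨0, by omega⟩ : Fin K) = astar := h _
    have h1 : (⟨1, by omega⟩ : Fin K) = astar := h _
    have : (⟨0, by omega⟩ : Fin K) = (⟨1, by omega⟩ : Fin K) := h0.trans h1.symm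
    simp [Fin.ext_iff] at this
  obtain ⟨b, hb⟩ := hne
  have hSne : (r '' {a | a ≠ astar}).Nonempty := ⟨r b, b, hb, rfl⟩
  have hSfin : (r '' {a | a ≠ astar}).Finite := Set.Finite.image _ (Set.toFinite _)
  have hbdd : BddAbove (r '' {a | a ≠ astar}) := hSfin.bddAbove
  have hmem : sSup (r '' {a | a ≠ astar}) ∈ r '' {a | a ≠ astar} :=
    hSne.csSup_mem hSfin
  obtain ⟨c, hc, hcr⟩ := hmem
  have hΔpos : 0 < Δ := by
    rw [hΔ, ← hcr]; linarith [hstar c hc]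
  have hgap : ∀ a : Fin K, a ≠ astar → Δ ≤ r astar - r a := by
    intro a ha
    have : r a ≤ sSup (r '' {a | a ≠ astar}) := le_csSup hbdd ⟨a, ha, rfl⟩
    rw [hΔ]; linarith
  intro t
  set θ := A ((List.range t).map fun k => (acts k, r (acts k))) with hθ
  set θ' := A (List.replicate t (astar, r astar)) with hθ'
  set p := softmax θ astar with hp
  set q := softmax θ' astar with hq
  have hpq : p ≤ q := hsmart acts t
  -- (1 - p) * Δ ≤ r astar - expReward r θ
  have hsum := softmax_sum hKpos θ
  have hrewrite : r astar - expReward r θ = ∑ a, softmax θ a * (r astar - r a) := by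
    unfold expReward
    simp only [mul_sub, Finset.sum_sub_distrib, ← Finset.sum_mul, hsum, one_mul]
  have key : (1 - p) * Δ ≤ r astar - expReward r θ := by
    rw [hrewrite]
    have hsplit : ∑ a, softmax θ a * (r astar - r a)
        = ∑ a ∈ Finset.univ.erase astar, softmax θ a * (r astar - r a) := by
      rw [Finset.sum_erase_eq_sub (Finset.mem_univ astar)]
      simp
    rw [hsplit]
    have h1 : (1 - p) * Δ = ∑ a ∈ Finset.univ.erase astar, softmax θ a * Δ := by
      rw [← Finset.sum_mul, Finset.sum_erase_eq_sub (Finset.mem_univ astar), hsum, hp]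
    rw [h1]
    apply Finset.sum_le_sum
    intro a ha
    have ha' : a ≠ astar := Finset.ne_of_mem_erase ha
    exact mul_le_mul_of_nonneg_left (by linarith [hgap a ha']) (softmax_nonneg θ a)
  -- combine
  have hT : (0 : ℝ) < ((t : ℝ) + 1) ^ α := Real.rpow_pos_of_pos (by positivity) α
  have h2 : (1 - q) * Δ ≤ C / ((t : ℝ) + 1) ^ α := by
    have := hconv t
    have h3 : (1 - q) * Δ ≤ (1 - p) * Δ :=
      mul_le_mul_of_nonneg_right (by linarith) hΔpos.le
    calc (1 - q) * Δ ≤ (1 - p) * Δ := h3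
      _ ≤ r astar - expReward r θ := key
      _ ≤ C / ((t : ℝ) + 1) ^ α := this
  rw [le_div_iff₀ hT] at h2
  rw [le_div_iff₀ hΔpos]
  nlinarith [h2]
end
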